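/- arXiv:2405.19304 — 2 statements merged into one kernel-verified Lean document; each statement's English description precedes it below -/
import Mathlib

section
/- Let r,m ≥ 1, let E ⊆ ℝ^r be a nonempty compact connected set and let f : E → ℝ^m be solvable. Then there exists a countable ordinal α (i.e. α < ω₁) such that the α-th set E_α in the sequence of f-removed sets on E is empty. -/
open Set Filter Topology

noncomputable section

/-- The set of points of `A` at which the restriction `f ↾ A` (with the subspace
topology on `A`) is discontinuous. -/
def discSet {X Y : Type*} [TopologicalSpace X] [TopologicalSpace Y]
    (f : X → Y) (A : Set X) : Set X :=
  {x | x ∈ A ∧ ¬ ContinuousWithinAt f A x}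

/-- `f` is of Baire class one on `E`: it is the pointwise limit on `E` of a
sequence of functions continuous on `E`. -/
def BaireOne {X Y : Type*} [TopologicalSpace X] [TopologicalSpace Y]
    (f : X → Y) (E : Set X) : Prop :=
  ∃ g : ℕ → X → Y, (∀ n, ContinuousOn (g n) E) ∧
    ∀ x ∈ E, Tendsto (fun n => g n x) atTop (nhds (f x))

/-- `f` is solvable on `E`: it is of Baire class one and for every closed
`K ⊆ E` the set of discontinuity points of `f ↾ K` is closed. -/
def SolvableOn {X Y : Type*} [TopologicalSpace X] [TopologicalSpace Y]
    (f : X → Y) (E : Set X) : Prop :=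
  BaireOne f E ∧ ∀ K : Set X, K ⊆ E → IsClosed K → IsClosed (discSet f K)

/-- The transfinite sequence of `f`-removed sets on `E`:
`E_0 = E`, `E_{α+1} = discSet f E_α`, and `E_λ = ⋂_{β<λ} E_β` at limits. -/
def removedSets {X Y : Type*} [TopologicalSpace X] [TopologicalSpace Y]
    (f : X → Y) (E : Set X) (α : Ordinal.{0}) : Set X :=
  Ordinal.limitRecOn α E (fun _ S => discSet f S)
    (fun o _ ih => ⋂ (β : Ordinal.{0}) (h : β < o), ih β h)

/-- `y` is differentiable on `[0,1]` with derivative `y'` (one-sided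
derivatives at the endpoints). -/
def DiffOnIcc (y y' : ℝ → ℝ) : Prop :=
  ∀ x ∈ Set.Icc (0:ℝ) 1, HasDerivWithinAt y (y' x) (Set.Icc (0:ℝ) 1) x

/-- The solvable ranking: the least ordinal `α` for which the `α`-th
`y'`-removed set on `[0,1]` is empty. -/
def solvRank (y' : ℝ → ℝ) : Ordinal.{0} :=
  sInf {α : Ordinal.{0} | removedSets y' (Set.Icc (0:ℝ) 1) α = ∅}



/-- Baire class one function on a nonempty complete metric space has a continuity point. -/
lemma baireOne_exists_continuousAt {X Y : Type*} [MetricSpace X] [CompleteSpace X]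
    [Nonempty X] [MetricSpace Y] (f : X → Y) (g : ℕ → X → Y)
    (hg : ∀ n, Continuous (g n))
    (hlim : ∀ x, Tendsto (fun n => g n x) atTop (nhds (f x))) :
    ∃ x, ContinuousAt f x := by
  classical
  set C : ℕ → ℕ → Set X := fun k n =>
    {x | ∀ p, n ≤ p → ∀ q, n ≤ q → dist (g p x) (g q x) ≤ 1 / (k + 1)} with hC
  have hCclosed : ∀ k n, IsClosed (C k n) := by
    intro k n
    have : C k n = ⋂ p, ⋂ (_ : n ≤ p), ⋂ q, ⋂ (_ : n ≤ q),
        {x | dist (g p x) (g q x) ≤ 1 / (k + 1)} := by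
      ext x; simp [hC]
    rw [this]
    exact isClosed_iInter fun p => isClosed_iInter fun _ => isClosed_iInter fun q =>
      isClosed_iInter fun _ => isClosed_le ((hg p).dist (hg q)) continuous_const
  have hkpos : ∀ k : ℕ, (0:ℝ) < 1 / (k + 1) := by
    intro k; positivity
  have hCunion : ∀ k, (⋃ n, C k n) = univ := by
    intro k
    ext x
    simp only [mem_iUnion, mem_univ, iff_true]
    have hcs : CauchySeq (fun n => g n x) := (hlim x).cauchySeq
    rcases Metric.cauchySeq_iff.1 hcs (1 / (k + 1)) (hkpos k) with ⟨N, hN⟩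
    exact ⟨N, fun p hp q hq => (hN p hp q hq).le⟩
  -- key estimate: on C k n, f is within 1/(k+1) of g n
  have hest : ∀ k n x, x ∈ C k n → dist (f x) (g n x) ≤ 1 / (k + 1) := by
    intro k n x hx
    have h1 : Tendsto (fun p => dist (g p x) (g n x)) atTop (nhds (dist (f x) (g n x))) :=
      (hlim x).dist tendsto_const_nhds
    refine le_of_tendsto h1 ?_
    filter_upwards [eventually_ge_atTop n] with p hp
    exact hx p hp n le_rfl
  have hD : ∀ k, Dense (⋃ n, interior (C k n)) := fun k =>
    dense_iUnion_interior_of_closed (hCclosed k) (hCunion k)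
  have hR : Dense (⋂ k, ⋃ n, interior (C k n)) :=
    dense_iInter_of_isOpen (fun k => isOpen_iUnion fun n => isOpen_interior) hD
  obtain ⟨x, hx⟩ := hR.nonempty
  refine ⟨x, ?_⟩
  rw [Metric.continuousAt_iff']
  intro ε hε
  obtain ⟨k, hk⟩ := exists_nat_one_div_lt (show (0:ℝ) < ε / 3 by linarith)
  have hxk : x ∈ ⋃ n, interior (C k n) := mem_iInter.1 hx k
  obtain ⟨n, hn⟩ := mem_iUnion.1 hxk
  have hU : interior (C k n) ∈ nhds x := (isOpen_interior).mem_nhds hn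
  have hgn : ∀ᶠ y in nhds x, dist (g n y) (g n x) < ε / 3 := by
    have := (hg n).continuousAt (x := x)
    exact Metric.tendsto_nhds.1 this (ε / 3) (by linarith)
  filter_upwards [hU, hgn] with y hy hgy
  have h1 : dist (f y) (g n y) ≤ 1 / (k + 1) := hest k n y (interior_subset hy)
  have h2 : dist (g n x) (f x) ≤ 1 / (k + 1) := by
    rw [dist_comm]; exact hest k n x (interior_subset hn)
  calc dist (f y) (f x) ≤ dist (f y) (g n y) + dist (g n y) (g n x) + dist (g n x) (f x) :=
        dist_triangle4 _ _ _ _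
    _ < ε / 3 + ε / 3 + ε / 3 := by
        have := h1.trans_lt hk
        have := h2.trans_lt hk
        linarith
    _ = ε := by ring


section RemovedSets

variable {X Y : Type*} [TopologicalSpace X] [TopologicalSpace Y]
  (f : X → Y) (E : Set X)

lemma removedSets_zero : removedSets f E 0 = E :=
  Ordinal.limitRecOn_zero _ _ _

lemma removedSets_succ (α : Ordinal.{0}) :
    removedSets f E (Order.succ α) = discSet f (removedSets f E α) :=
  Ordinal.limitRecOn_succ _ _ _ _

lemma removedSets_limit (α : Ordinal.{0}) (h : Order.IsSuccLimit α) :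
    removedSets f E α = ⋂ (β : Ordinal.{0}) (_ : β < α), removedSets f E β :=
  Ordinal.limitRecOn_limit _ _ _ _ h

lemma discSet_subset (A : Set X) : discSet f A ⊆ A := fun _ hx => hx.1

lemma removedSets_subset (α : Ordinal.{0}) : removedSets f E α ⊆ E := by
  induction α using Ordinal.limitRecOn with
  | zero => rw [removedSets_zero]
  | add_one β ih => rw [Ordinal.add_one_eq_succ, removedSets_succ]; exact (discSet_subset f _).trans ih
  | limit β hβ ih =>
      rw [removedSets_limit f E β hβ]
      intro x hx
      have h0 : (0 : Ordinal.{0}) < β := hβ.pos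
      have := mem_iInter.1 (mem_iInter.1 hx 0) h0
      rwa [removedSets_zero] at this

lemma removedSets_anti {α β : Ordinal.{0}} (h : α ≤ β) :
    removedSets f E β ⊆ removedSets f E α := by
  induction β using Ordinal.limitRecOn with
  | zero => rw [nonpos_iff_eq_zero.1 h]
  | add_one β ih =>
      rw [Ordinal.add_one_eq_succ] at h ⊢
      rcases eq_or_lt_of_le h with h' | h'
      · rw [h']
      · rw [removedSets_succ]
        exact (discSet_subset f _).trans (ih (Order.lt_succ_iff.1 h'))
  | limit β hβ ih =>
      rcases eq_or_lt_of_le h with h' | h'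
      · rw [h']
      · rw [removedSets_limit f E β hβ]
        intro x hx
        exact mem_iInter.1 (mem_iInter.1 hx α) h'

lemma removedSets_isClosed (hE : IsClosed E)
    (hsolv : ∀ K : Set X, K ⊆ E → IsClosed K → IsClosed (discSet f K))
    (α : Ordinal.{0}) : IsClosed (removedSets f E α) := by
  induction α using Ordinal.limitRecOn with
  | zero => rwa [removedSets_zero]
  | add_one β ih =>
      rw [Ordinal.add_one_eq_succ, removedSets_succ]
      exact hsolv _ (removedSets_subset f E β) ih
  | limit β hβ ih =>
      rw [removedSets_limit f E β hβ]
      exact isClosed_iInter fun γ => isClosed_iInter fun hγ => ih γ hγ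

end RemovedSets


theorem statement0 (r m : ℕ) (hr : 1 ≤ r) (hm : 1 ≤ m)
    (E : Set (Fin r → ℝ)) (hne : E.Nonempty) (hcomp : IsCompact E)
    (hconn : IsConnected E)
    (f : (Fin r → ℝ) → (Fin m → ℝ)) (hf : SolvableOn f E) :
    ∃ α : Ordinal.{0}, α < (Ordinal.omega 1 : Ordinal.{0}) ∧ removedSets f E α = ∅ := by
  classical
  by_contra hcon
  push_neg at hcon
  have hne' : ∀ α : Ordinal.{0}, α < (Ordinal.omega 1 : Ordinal.{0}) →
      (removedSets f E α).Nonempty := hcon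
  obtain ⟨⟨g, hgc, hgl⟩, hsolv⟩ := hf
  have hEc : IsClosed E := hcomp.isClosed
  have hcl : ∀ α : Ordinal.{0}, IsClosed (removedSets f E α) :=
    removedSets_isClosed f E hEc hsolv
  -- strict decrease: at each countable stage there is a continuity point
  have hstrict : ∀ α : Ordinal.{0}, α < (Ordinal.omega 1 : Ordinal.{0}) →
      ∃ x, x ∈ removedSets f E α ∧ x ∉ removedSets f E (Order.succ α) := by
    intro α hα
    set K := removedSets f E α with hK
    have hKE : K ⊆ E := removedSets_subset f E α
    have hKc : IsClosed K := hcl α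
    haveI : CompleteSpace K := hKc.completeSpace_coe
    haveI : Nonempty K := (hne' α hα).to_subtype
    have hgc' : ∀ n, Continuous (K.restrict (g n)) := fun n =>
      continuousOn_iff_continuous_restrict.1 ((hgc n).mono hKE)
    have hgl' : ∀ x : K, Tendsto (fun n => K.restrict (g n) x) atTop
        (nhds (K.restrict f x)) := fun x => hgl x (hKE x.2)
    obtain ⟨x, hx⟩ := baireOne_exists_continuousAt (K.restrict f) _ hgc' hgl'
    refine ⟨(x : Fin r → ℝ), x.2, ?_⟩
    rw [removedSets_succ]
    intro hmem
    exact hmem.2 ((continuousWithinAt_iff_continuousAt_restrict f x.2).2 hx)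
  -- countable basis and the injection
  obtain ⟨b, hbc, -, hb⟩ := TopologicalSpace.exists_countable_basis (Fin r → ℝ)
  have key : ∀ α : Ordinal.{0}, α < (Ordinal.omega 1 : Ordinal.{0}) →
      ∃ U : Set (Fin r → ℝ), U ∈ b ∧ (∃ x, x ∈ U ∧ x ∈ removedSets f E α) ∧
        U ∩ removedSets f E (Order.succ α) = ∅ := by
    intro α hα
    obtain ⟨x, hx1, hx2⟩ := hstrict α hα
    have hopen : IsOpen (removedSets f E (Order.succ α))ᶜ := (hcl _).isOpen_compl
    obtain ⟨U, hUb, hxU, hUsub⟩ := hb.exists_subset_of_mem_open hx2 hopen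
    refine ⟨U, hUb, ⟨x, hxU, hx1⟩, ?_⟩
    rw [eq_empty_iff_forall_notMem]
    rintro y ⟨hy1, hy2⟩
    exact hUsub hy1 hy2
  choose U hUb hUx hUdisj using key
  -- the map α ↦ U α is injective on Iio ω₁
  have hinj : ∀ (α β : Ordinal.{0}) (hα : α < (Ordinal.omega 1 : Ordinal.{0}))
      (hβ : β < (Ordinal.omega 1 : Ordinal.{0})), α < β → U α hα ≠ U β hβ := by
    intro α β hα hβ hlt heq
    obtain ⟨x, hxU, hxR⟩ := hUx β hβ
    have hsucc : Order.succ α ≤ β := Order.succ_le_of_lt hlt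
    have hx' : x ∈ removedSets f E (Order.succ α) := removedSets_anti f E hsucc hxR
    have : x ∈ U α hα ∩ removedSets f E (Order.succ α) := ⟨heq ▸ hxU, hx'⟩
    rw [hUdisj α hα] at this
    exact this
  haveI : Countable b := hbc.to_subtype
  have hcount : Countable (Set.Iio (Ordinal.omega 1 : Ordinal.{0})) := by
    have : Function.Injective
        (fun p : Set.Iio (Ordinal.omega 1 : Ordinal.{0}) => (⟨U p.1 p.2, hUb p.1 p.2⟩ : b)) := by
      rintro ⟨a, ha⟩ ⟨c, hc⟩ h
      simp only [Subtype.mk.injEq] at h ⊢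
      rcases lt_trichotomy a c with h' | h' | h'
      · exact absurd h (hinj a c ha hc h')
      · exact h'
      · exact absurd h.symm (hinj c a hc ha h')
    exact Function.Injective.countable this
  have hmk : (Cardinal.mk (Set.Iio (Ordinal.omega 1 : Ordinal.{0}))) ≤ Cardinal.aleph0 :=
    Cardinal.mk_le_aleph0
  rw [Ordinal.mk_Iio_ordinal, Ordinal.card_omega, ← Cardinal.lift_aleph0.{1,0},
    Cardinal.lift_le] at hmk
  exact absurd hmk (not_le.2 Cardinal.aleph0_lt_aleph_one)

end
end

section
/- Let E = [−5,5] × [−15,15] and define f : E → ℝ² by f(x,z) = (1, 2x·sin(1/x) − cos(1/x)) for x ≠ 0 and f(0,z) = (1,0). Define y : [−2,2] → ℝ² by y(t) = (t−1, (t−1)²·sin(1/(t−1))) for t ≠ 1 and y(1) = (0,0). Then y is differentiable (one-sided derivatives at the endpoints), y takes values in E, y(−2) = (−3, 9·sin(−1/3)), y'(t) = f(y(t)) for all t ∈ [−2,2], and y is the unique such solution: every differentiable z : [−2,2] → E with z(−2) = (−3, 9·sin(−1/3)) and z'(t) = f(z(t)) for all t ∈ [−2,2] equals y. -/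
open Set Filter Topology

noncomputable section

def E16 : Set (ℝ × ℝ) := Set.Icc (-5:ℝ) 5 ×ˢ Set.Icc (-15:ℝ) 15

def f16 : ℝ × ℝ → ℝ × ℝ := fun w =>
  if w.1 = 0 then (1, 0)
  else (1, 2 * w.1 * Real.sin (1 / w.1) - Real.cos (1 / w.1))

def y16 : ℝ → ℝ × ℝ := fun t =>
  (t - 1, if t = 1 then 0 else (t - 1) ^ 2 * Real.sin (1 / (t - 1)))


noncomputable def g16 : ℝ → ℝ := fun x => if x = 0 then 0 else x ^ 2 * Real.sin (1 / x)

noncomputable def gd16 : ℝ → ℝ := fun x =>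
  if x = 0 then 0 else 2 * x * Real.sin (1 / x) - Real.cos (1 / x)

lemma abs_g16_le (x : ℝ) : |g16 x| ≤ x ^ 2 := by
  unfold g16
  split
  · simp [sq_nonneg]
  · rw [abs_mul, abs_pow, sq_abs]
    calc x ^ 2 * |Real.sin (1 / x)| ≤ x ^ 2 * 1 :=
          mul_le_mul_of_nonneg_left (abs_le.2 ⟨Real.neg_one_le_sin _, Real.sin_le_one _⟩)
            (sq_nonneg x)
      _ = x ^ 2 := mul_one _

lemma hasDerivAt_g16 (x : ℝ) : HasDerivAt g16 (gd16 x) x := by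
  rcases eq_or_ne x 0 with rfl | hx
  · rw [hasDerivAt_iff_isLittleO, Asymptotics.isLittleO_iff]
    intro c hc
    filter_upwards [Metric.ball_mem_nhds (0:ℝ) hc] with y hy
    simp only [Metric.mem_ball, Real.dist_eq, sub_zero] at hy
    have h0 : g16 0 = 0 := by simp [g16]
    have hgd : gd16 0 = 0 := by simp [gd16]
    simp only [hgd, h0, sub_zero, smul_zero, sub_zero]
    calc ‖g16 y‖ ≤ y ^ 2 := abs_g16_le y
      _ = |y| * |y| := by rw [sq, abs_mul_abs_self]
      _ ≤ c * ‖y‖ := by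
          apply mul_le_mul_of_nonneg_right hy.le (abs_nonneg y)
  · have h1 : HasDerivAt (fun y : ℝ => y ^ 2) (2 * x) x := by
      simpa using hasDerivAt_pow 2 x
    have h2 : HasDerivAt (fun y : ℝ => Real.sin (1 / y)) (Real.cos (1/x) * (-(x ^ 2)⁻¹)) x := by
      have := (Real.hasDerivAt_sin x⁻¹).comp x (hasDerivAt_inv hx)
      simpa [one_div, Function.comp_def] using this
    have h3 := h1.mul h2
    have heq : g16 =ᶠ[𝓝 x] fun y => y ^ 2 * Real.sin (1 / y) := by
      filter_upwards [isOpen_ne.mem_nhds hx] with y hy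
      simp [g16, hy]
    have h4 : HasDerivAt g16 (2 * x * Real.sin (1/x) + x ^ 2 * (Real.cos (1/x) * (-(x^2)⁻¹))) x :=
      h3.congr_of_eventuallyEq heq
    convert h4 using 1
    rw [gd16, if_neg hx]
    field_simp
    ring


lemma y16_eq (t : ℝ) : y16 t = (t - 1, g16 (t - 1)) := by
  simp only [y16, g16, sub_eq_zero]

lemma f16_eq (w : ℝ × ℝ) : f16 w = (1, gd16 w.1) := by
  unfold f16 gd16
  split <;> simp_all

lemma hasDerivAt_y16 (t : ℝ) : HasDerivAt y16 (1, gd16 (t - 1)) t := by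
  have h1 : HasDerivAt (fun t : ℝ => t - 1) 1 t := (hasDerivAt_id t).sub_const 1
  have h2 : HasDerivAt (fun t : ℝ => g16 (t - 1)) (gd16 (t - 1)) t := by
    simpa [Function.comp_def] using (hasDerivAt_g16 (t - 1)).comp t h1
  have h3 := h1.prodMk h2
  have : y16 = fun t => (t - 1, g16 (t - 1)) := funext y16_eq
  rw [this]
  exact h3

lemma fst_hasDeriv {z : ℝ → ℝ × ℝ} {v : ℝ × ℝ} {s : Set ℝ} {t : ℝ}
    (h : HasDerivWithinAt z v s t) : HasDerivWithinAt (fun u => (z u).1) v.1 s t := by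
  have := h.hasFDerivWithinAt.fst.hasDerivWithinAt
  simpa using this

lemma snd_hasDeriv {z : ℝ → ℝ × ℝ} {v : ℝ × ℝ} {s : Set ℝ} {t : ℝ}
    (h : HasDerivWithinAt z v s t) : HasDerivWithinAt (fun u => (z u).2) v.2 s t := by
  have := h.hasFDerivWithinAt.snd.hasDerivWithinAt
  simpa using this

lemma eq_of_same_deriv {a b : ℝ} {u v d : ℝ → ℝ}
    (hu : ∀ t ∈ Set.Icc a b, HasDerivWithinAt u (d t) (Set.Icc a b) t)
    (hv : ∀ t ∈ Set.Icc a b, HasDerivWithinAt v (d t) (Set.Icc a b) t)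
    (h0 : u a = v a) : ∀ t ∈ Set.Icc a b, u t = v t := by
  intro t ht
  have key : ∀ x ∈ Set.Icc a b, (u - v) x = (u - v) a := by
    apply constant_of_has_deriv_right_zero
    · intro x hx
      exact ((hu x hx).sub (hv x hx)).continuousWithinAt
    · intro x hx
      have := ((hu x (Ico_subset_Icc_self hx)).sub (hv x (Ico_subset_Icc_self hx)))
      rw [sub_self] at this
      exact this.mono_of_mem_nhdsWithin (Icc_mem_nhdsGE_of_mem hx)
  have := key t ht
  simp only [Pi.sub_apply, h0, sub_self] at this
  linarith [this]


theorem statement16 :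
    (∀ t ∈ Set.Icc (-2:ℝ) 2, y16 t ∈ E16) ∧
    y16 (-2) = (-3, 9 * Real.sin (-(1/3))) ∧
    (∀ t ∈ Set.Icc (-2:ℝ) 2, HasDerivWithinAt y16 (f16 (y16 t)) (Set.Icc (-2:ℝ) 2) t) ∧
    (∀ z : ℝ → ℝ × ℝ, (∀ t ∈ Set.Icc (-2:ℝ) 2, z t ∈ E16) →
      z (-2) = (-3, 9 * Real.sin (-(1/3))) →
      (∀ t ∈ Set.Icc (-2:ℝ) 2, HasDerivWithinAt z (f16 (z t)) (Set.Icc (-2:ℝ) 2) t) →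
      ∀ t ∈ Set.Icc (-2:ℝ) 2, z t = y16 t) := by
  have hval : y16 (-2) = (-3, 9 * Real.sin (-(1/3))) := by
    rw [y16_eq]
    norm_num [g16]
  have hderiv : ∀ t ∈ Set.Icc (-2:ℝ) 2,
      HasDerivWithinAt y16 (f16 (y16 t)) (Set.Icc (-2:ℝ) 2) t := by
    intro t _
    have : f16 (y16 t) = (1, gd16 (t - 1)) := by rw [f16_eq, y16_eq]
    rw [this]
    exact (hasDerivAt_y16 t).hasDerivWithinAt
  refine ⟨?_, hval, hderiv, ?_⟩
  · intro t ht
    obtain ⟨h1, h2⟩ := ht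
    rw [y16_eq]
    constructor
    · constructor <;> simp <;> linarith
    · have := abs_g16_le (t - 1)
      have h3 : (t - 1) ^ 2 ≤ 9 := by nlinarith
      have := abs_le.1 this
      constructor <;> simp <;> linarith [this.1, this.2]
  · intro z hzE hz0 hz'
    intro t ht
    -- first component
    have hz1 : ∀ s ∈ Set.Icc (-2:ℝ) 2, (z s).1 = s - 1 := by
      apply eq_of_same_deriv (d := fun _ => (1:ℝ))
      · intro s hs
        have := fst_hasDeriv (hz' s hs)
        have h1 : (f16 (z s)).1 = 1 := by rw [f16_eq]
        rwa [h1] at this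
      · intro s _
        exact ((hasDerivAt_id s).sub_const 1).hasDerivWithinAt
      · rw [hz0]; norm_num
    -- second component
    have hz2 : ∀ s ∈ Set.Icc (-2:ℝ) 2, (z s).2 = g16 (s - 1) := by
      apply eq_of_same_deriv (d := fun s => gd16 (s - 1))
      · intro s hs
        have := snd_hasDeriv (hz' s hs)
        have h1 : (f16 (z s)).2 = gd16 (s - 1) := by rw [f16_eq]; simp [hz1 s hs]
        rwa [h1] at this
      · intro s _
        have h1 : HasDerivAt (fun u : ℝ => u - 1) 1 s := (hasDerivAt_id s).sub_const 1
        have := (hasDerivAt_g16 (s - 1)).comp s h1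
        simpa [Function.comp_def] using this.hasDerivWithinAt
      · rw [hz0]
        norm_num [g16]
    rw [y16_eq]
    exact Prod.ext (hz1 t ht) (hz2 t ht)


end
end
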